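/- The map sending an equivalence class [π]_Y of permutations under ∼_Y to the acyclic orientation O_Y^π is a well-defined bijection from S_Y/∼_Y to Acyc(Y). -/

import Mathlib

namespace AcycPaper

variable {V : Type*}

/-- `r` is an orientation of the graph `Y`: exactly one direction per edge. -/
def IsOrientation (Y : SimpleGraph V) (r : V → V → Prop) : Prop :=
  (∀ i j, Y.Adj i j ↔ (r i j ∨ r j i)) ∧ ∀ i j, r i j → ¬ r j i

/-- A relation is acyclic if it has no directed cycles. -/
def IsAcyclicRel (r : V → V → Prop) : Prop := ∀ v, ¬ Relation.TransGen r v v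

/-- The set of acyclic orientations of `Y`. -/
def Acyc (Y : SimpleGraph V) : Set (V → V → Prop) :=
  {r | IsOrientation Y r ∧ IsAcyclicRel r}

/-- `v` is a source: no edge points into `v`. -/
def IsSource (r : V → V → Prop) (v : V) : Prop := ∀ j, ¬ r j v

open Classical in
/-- Click (source-to-sink move) at `v`: reverse all edges incident to `v`. -/
def click (r : V → V → Prop) (v : V) : V → V → Prop :=
  fun i j => if v = i ∨ v = j then r j i else r i j

/-- One click step between acyclic orientations. -/
def ClickStep (Y : SimpleGraph V) (r r' : V → V → Prop) : Prop :=
  r ∈ Acyc Y ∧ ∃ v, IsSource r v ∧ r' = click r v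

/-- κ-equivalence: the equivalence relation generated by clicks. -/
def KEquiv (Y : SimpleGraph V) : (V → V → Prop) → (V → V → Prop) → Prop :=
  Relation.EqvGen (ClickStep Y)

/-- The set of κ-equivalence classes of acyclic orientations. -/
def KQuot (Y : SimpleGraph V) := Quot (fun a b : Acyc Y => ClickStep Y a.1 b.1)

/-- κ(Y): number of κ-equivalence classes. -/
noncomputable def kappa (Y : SimpleGraph V) : ℕ := Nat.card (KQuot Y)

/-- α(Y): number of acyclic orientations. -/
noncomputable def alpha (Y : SimpleGraph V) : ℕ := Nat.card (Acyc Y)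

/-- The orientation of `Y` induced by a permutation `π` (position `k` holds
vertex `π k`): each edge is oriented from the vertex occurring earlier in `π`
to the one occurring later. -/
def permRel {n : ℕ} (Y : SimpleGraph (Fin n)) (π : Equiv.Perm (Fin n)) :
    Fin n → Fin n → Prop :=
  fun i j => Y.Adj i j ∧ π.symm i < π.symm j

/-- Adjacency in the update graph U(Y): the two permutations differ by swapping
two consecutive positions holding vertices non-adjacent in `Y`. -/
def UpdateAdj {n : ℕ} (Y : SimpleGraph (Fin n)) (π π' : Equiv.Perm (Fin n)) : Prop :=
  ∃ (k : ℕ) (hk : k + 1 < n),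
    ¬ Y.Adj (π ⟨k, Nat.lt_of_succ_lt hk⟩) (π ⟨k + 1, hk⟩) ∧
    π' = π * Equiv.swap ⟨k, Nat.lt_of_succ_lt hk⟩ ⟨k + 1, hk⟩

private lemma swap_lt_iff {n : ℕ} {a b x y : Fin n} (hab : (a : ℕ) + 1 = (b : ℕ))
    (h1 : ¬(x = a ∧ y = b)) (h2 : ¬(x = b ∧ y = a)) :
    Equiv.swap a b x < Equiv.swap a b y ↔ x < y := by
  simp only [Equiv.swap_apply_def]
  split_ifs <;> simp only [Fin.ext_iff, Fin.lt_iff_val_lt_val, not_and] at * <;> omega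

private lemma lt_of_adj_lt {n : ℕ} (f : Fin n → Fin n)
    (h : ∀ (k : ℕ) (hk : k + 1 < n), f ⟨k, Nat.lt_of_succ_lt hk⟩ < f ⟨k + 1, hk⟩) :
    ∀ p q : Fin n, p < q → f p < f q := by
  have key : ∀ (d : ℕ) (p q : Fin n), (p : ℕ) + d + 1 = (q : ℕ) → f p < f q := by
    intro d
    induction d with
    | zero =>
      intro p q hpq
      have hk : (p : ℕ) + 1 < n := by have := q.isLt; omega
      have hq : q = ⟨(p : ℕ) + 1, hk⟩ := by apply Fin.ext; simp; omega
      rw [hq]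
      exact h p.1 hk
    | succ d ih =>
      intro p q hpq
      have hm : (p : ℕ) + d + 1 < n := by have := q.isLt; omega
      have h1 := ih p ⟨(p : ℕ) + d + 1, hm⟩ (by simp)
      have hk2 : ((p : ℕ) + d + 1) + 1 < n := by have := q.isLt; omega
      have h2 := h ((p : ℕ) + d + 1) hk2
      have hq : q = ⟨(p : ℕ) + d + 1 + 1, hk2⟩ := by apply Fin.ext; simp; omega
      rw [hq]
      exact h1.trans h2
  intro p q hpq
  obtain ⟨d, hd⟩ : ∃ d, (p : ℕ) + d + 1 = (q : ℕ) :=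
    ⟨(q : ℕ) - (p : ℕ) - 1, by have := Fin.lt_iff_val_lt_val.mp hpq; omega⟩
  exact key d p q hd

private lemma permRel_step {n : ℕ} (Y : SimpleGraph (Fin n)) (π : Equiv.Perm (Fin n))
    (k : ℕ) (hk : k + 1 < n)
    (hadj : ¬ Y.Adj (π ⟨k, Nat.lt_of_succ_lt hk⟩) (π ⟨k + 1, hk⟩)) :
    permRel Y (π * Equiv.swap ⟨k, Nat.lt_of_succ_lt hk⟩ ⟨k + 1, hk⟩) = permRel Y π := by
  set a : Fin n := ⟨k, Nat.lt_of_succ_lt hk⟩ with ha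
  set b : Fin n := ⟨k + 1, hk⟩ with hb
  have hsymm : ∀ x, (π * Equiv.swap a b).symm x = Equiv.swap a b (π.symm x) := by
    intro x
    simp [Equiv.Perm.mul_def, Equiv.symm_trans_apply]
  funext i j
  apply propext
  unfold permRel
  rw [hsymm i, hsymm j]
  refine and_congr_right fun hij => ?_
  apply swap_lt_iff rfl
  · rintro ⟨hh1, hh2⟩
    exact hadj (((Equiv.symm_apply_eq π).mp hh1) ▸ ((Equiv.symm_apply_eq π).mp hh2) ▸ hij)
  · rintro ⟨hh1, hh2⟩
    exact hadj (((Equiv.symm_apply_eq π).mp hh1) ▸ ((Equiv.symm_apply_eq π).mp hh2) ▸ hij.symm)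

private def invSet {n : ℕ} (σ : Equiv.Perm (Fin n)) : Finset (Fin n × Fin n) :=
  Finset.univ.filter (fun p : Fin n × Fin n => p.1 < p.2 ∧ σ p.2 < σ p.1)

private lemma invSet_swap_lt {n : ℕ} (σ : Equiv.Perm (Fin n)) {a b : Fin n}
    (hab : (a : ℕ) + 1 = (b : ℕ)) (hdes : σ b < σ a) :
    (invSet (σ * Equiv.swap a b)).card < (invSet σ).card := by
  have hablt : a < b := by rw [Fin.lt_iff_val_lt_val]; omega
  have hmem : (a, b) ∈ invSet σ := by simp [invSet, hablt, hdes]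
  have hle : (invSet (σ * Equiv.swap a b)).card ≤ ((invSet σ).erase (a, b)).card := by
    apply Finset.card_le_card_of_injOn (fun p => (Equiv.swap a b p.1, Equiv.swap a b p.2))
    · rintro ⟨p, q⟩ hpq
      simp only [Finset.mem_coe, invSet, Finset.mem_filter, Finset.mem_univ, true_and] at hpq
      obtain ⟨hlt, hinv⟩ := hpq
      have hinv' : σ (Equiv.swap a b q) < σ (Equiv.swap a b p) := hinv
      have h1 : ¬(p = a ∧ q = b) := by
        rintro ⟨rfl, rfl⟩
        rw [Equiv.swap_apply_left, Equiv.swap_apply_right] at hinv'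
        exact absurd hinv' (asymm hdes)
      have h2 : ¬(p = b ∧ q = a) := by
        rintro ⟨rfl, rfl⟩
        rw [Fin.lt_iff_val_lt_val] at hlt; omega
      have hsw : Equiv.swap a b p < Equiv.swap a b q := (swap_lt_iff hab h1 h2).mpr hlt
      apply Finset.mem_erase.mpr
      refine ⟨?_, by simp [invSet, hsw, hinv']⟩
      intro hcon
      rw [Prod.mk.injEq] at hcon
      obtain ⟨hc1, hc2⟩ := hcon
      have hp : p = b := (Equiv.swap a b).injective (by rw [hc1, Equiv.swap_apply_right])
      have hq : q = a := (Equiv.swap a b).injective (by rw [hc2, Equiv.swap_apply_left])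
      subst hp; subst hq
      rw [Fin.lt_iff_val_lt_val] at hlt; omega
    · rintro ⟨p1, q1⟩ - ⟨p2, q2⟩ - h
      rw [Prod.mk.injEq] at h ⊢
      exact ⟨(Equiv.swap a b).injective h.1, (Equiv.swap a b).injective h.2⟩
  exact hle.trans_lt (Finset.card_erase_lt_of_mem hmem)

private lemma connect {n : ℕ} (Y : SimpleGraph (Fin n)) (π' : Equiv.Perm (Fin n)) :
    ∀ (N : ℕ) (π : Equiv.Perm (Fin n)), (invSet (π'⁻¹ * π)).card = N →
      permRel Y π = permRel Y π' → Relation.EqvGen (UpdateAdj Y) π π' := by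
  intro N
  induction N using Nat.strong_induction_on with
  | _ N ih =>
    intro π hcard heq
    by_cases hdesc : ∃ (k : ℕ) (hk : k + 1 < n),
        (π'⁻¹ * π) ⟨k + 1, hk⟩ < (π'⁻¹ * π) ⟨k, Nat.lt_of_succ_lt hk⟩
    · obtain ⟨k, hk, hdes⟩ := hdesc
      set a : Fin n := ⟨k, Nat.lt_of_succ_lt hk⟩ with ha
      set b : Fin n := ⟨k + 1, hk⟩ with hb
      have hnadj : ¬ Y.Adj (π a) (π b) := by
        intro hadj
        have h1 : permRel Y π (π a) (π b) :=
          ⟨hadj, by simp only [Equiv.symm_apply_apply]; exact Fin.mk_lt_mk.mpr (Nat.lt_succ_self k)⟩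
        have h2 : permRel Y π' (π a) (π b) := (congrFun (congrFun heq (π a)) (π b)) ▸ h1
        have hlt : (π'⁻¹ * π) a < (π'⁻¹ * π) b := h2.2
        exact absurd hdes (asymm hlt)
      have hstep : UpdateAdj Y π (π * Equiv.swap a b) := ⟨k, hk, hnadj, rfl⟩
      have hcard2 : (invSet (π'⁻¹ * (π * Equiv.swap a b))).card < N := by
        rw [← mul_assoc]
        exact hcard ▸ invSet_swap_lt (π'⁻¹ * π) rfl hdes
      have heq2 : permRel Y (π * Equiv.swap a b) = permRel Y π' :=
        (permRel_step Y π k hk hnadj).trans heq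
      have hrest := ih _ hcard2 (π * Equiv.swap a b) rfl heq2
      exact Relation.EqvGen.trans _ _ _ (Relation.EqvGen.rel _ _ hstep) hrest
    · push_neg at hdesc
      have hmono : ∀ p q : Fin n, p < q → (π'⁻¹ * π) p < (π'⁻¹ * π) q := by
        apply lt_of_adj_lt
        intro k hk
        rcases lt_trichotomy ((π'⁻¹ * π) ⟨k, Nat.lt_of_succ_lt hk⟩) ((π'⁻¹ * π) ⟨k + 1, hk⟩)
          with h | h | h
        · exact h
        · exact absurd ((π'⁻¹ * π).injective h) (by intro hc; rw [Fin.ext_iff] at hc; simp at hc)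
        · exact absurd h (not_lt.mpr (hdesc k hk))
      have hid : ((π'⁻¹ * π : Equiv.Perm (Fin n)) : Fin n → Fin n) = id := by
        apply ((StrictMono.range_inj (fun p q h => hmono p q h) strictMono_id)).mp
        rw [Equiv.range_eq_univ, Set.range_id]
      have hone : π'⁻¹ * π = 1 := Equiv.ext fun x => congrFun hid x
      have : π' = π := inv_mul_eq_one.mp hone
      rw [this]
      exact Relation.EqvGen.refl π

/-- the map [π]_Y ↦ O_Y^π is a well-defined bijection from
S_Y/∼_Y (permutations modulo the equivalence generated by the update graph)
to Acyc(Y). -/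
theorem permRel_wellDefined_bijection {n : ℕ} (Y : SimpleGraph (Fin n)) :
    (∀ π π' : Equiv.Perm (Fin n),
        Relation.EqvGen (UpdateAdj Y) π π' → permRel Y π = permRel Y π') ∧
    (∀ π : Equiv.Perm (Fin n), permRel Y π ∈ Acyc Y) ∧
    (∀ π π' : Equiv.Perm (Fin n),
        permRel Y π = permRel Y π' → Relation.EqvGen (UpdateAdj Y) π π') ∧
    (∀ r ∈ Acyc Y, ∃ π : Equiv.Perm (Fin n), permRel Y π = r) := by
  refine ⟨?_, ?_, ?_, ?_⟩
  · -- well-definedness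
    intro π π' h
    induction h with
    | rel x y hxy =>
      obtain ⟨k, hk, hadj, rfl⟩ := hxy
      exact (permRel_step Y x k hk hadj).symm
    | refl x => rfl
    | symm x y _ ihxy => exact ihxy.symm
    | trans x y z _ _ ih1 ih2 => exact ih1.trans ih2
  · -- permRel is an acyclic orientation
    intro π
    refine ⟨⟨fun i j => ?_, fun i j hij hji => ?_⟩, fun v hv => ?_⟩
    · constructor
      · intro h
        rcases lt_trichotomy (π.symm i) (π.symm j) with hlt | heq | hgt
        · exact Or.inl ⟨h, hlt⟩
        · exact absurd (π.symm.injective heq) (Y.ne_of_adj h)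
        · exact Or.inr ⟨h.symm, hgt⟩
      · rintro (⟨h, -⟩ | ⟨h, -⟩)
        · exact h
        · exact h.symm
    · exact absurd hji.2 (asymm hij.2)
    · have hmono : ∀ x y, Relation.TransGen (permRel Y π) x y → π.symm x < π.symm y := by
        intro x y h
        induction h with
        | single h => exact h.2
        | tail _ h ihh => exact ihh.trans h.2
      exact absurd (hmono v v hv) (lt_irrefl _)
  · -- injectivity on classes
    intro π π' heq
    exact connect Y π' _ π rfl heq
  · -- surjectivity
    rintro r ⟨⟨hor1, hor2⟩, hacyc⟩
    have hirr : ∀ i, ¬ r i i := fun i hi => Y.loopless.irrefl i ((hor1 i i).mpr (Or.inl hi))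
    let p : Fin n → Fin n → Prop := fun i j => i = j ∨ Relation.TransGen r i j
    haveI : IsRefl (Fin n) p := ⟨fun a => Or.inl rfl⟩
    haveI : IsTrans (Fin n) p := ⟨by
      rintro a b c (rfl | h1) (rfl | h2)
      exacts [Or.inl rfl, Or.inr h2, Or.inr h1, Or.inr (h1.trans h2)]⟩
    haveI : IsAntisymm (Fin n) p := ⟨by
      rintro a b (rfl | h1) h2
      · rfl
      · rcases h2 with rfl | h2
        · rfl
        · exact absurd (h1.trans h2) (hacyc a)⟩
    haveI : IsPreorder (Fin n) p := ⟨⟩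
    haveI hpo : IsPartialOrder (Fin n) p := ⟨⟩
    obtain ⟨s, hs, hps⟩ := extend_partialOrder p
    haveI := hs
    let t : Fin n → Fin n → Prop := fun i j => s i j ∧ i ≠ j
    haveI : IsTrichotomous (Fin n) t := ⟨by
      intro a b h1 h2
      by_contra hab
      rcases total_of s a b with h | h
      · exact h1 ⟨h, hab⟩
      · exact h2 ⟨h, Ne.symm hab⟩⟩
    haveI : IsTrans (Fin n) t := ⟨by
      rintro a b c ⟨h1, ne1⟩ ⟨h2, ne2⟩
      refine ⟨_root_.trans h1 h2, ?_⟩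
      rintro rfl
      exact ne1 (_root_.antisymm h1 h2)⟩
    haveI : IsIrrefl (Fin n) t := ⟨fun a h => h.2 rfl⟩
    haveI : IsStrictOrder (Fin n) t := ⟨⟩
    haveI : IsStrictTotalOrder (Fin n) t := ⟨⟩
    haveI : DecidableRel t := fun a b => Classical.dec _
    letI lo : LinearOrder (Fin n) := linearOrderOfSTO t
    let e := @monoEquivOfFin (Fin n) _ lo n (Fintype.card_fin n)
    let φ : Equiv.Perm (Fin n) := e.toEquiv
    have key : ∀ i j, r i j → t i j := by
      intro i j hij
      refine ⟨hps i j (Or.inr (Relation.TransGen.single hij)), ?_⟩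
      rintro rfl
      exact hirr i hij
    have hle : ∀ x y : Fin n, (φ x = φ y ∨ t (φ x) (φ y)) ↔ x.val ≤ y.val := by
      intro x y
      exact e.map_rel_iff
    have hlt : ∀ i j : Fin n, (φ.symm i).val < (φ.symm j).val ↔ t i j := by
      intro i j
      constructor
      · intro h
        have h4 := (hle _ _).mpr (Nat.le_of_lt h)
        rw [φ.apply_symm_apply, φ.apply_symm_apply] at h4
        rcases h4 with h4 | h4
        · rw [h4] at h; exact absurd h (lt_irrefl _)
        · exact h4
      · intro ht
        have h4 : φ (φ.symm i) = φ (φ.symm j) ∨ t (φ (φ.symm i)) (φ (φ.symm j)) := by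
          rw [φ.apply_symm_apply, φ.apply_symm_apply]; exact Or.inr ht
        have h2 := (hle _ _).mp h4
        rcases Nat.lt_or_ge (φ.symm i).val (φ.symm j).val with h | h
        · exact h
        · exfalso
          have hxy : φ.symm i = φ.symm j := Fin.ext (Nat.le_antisymm h2 h)
          have : i = j := by rw [← φ.apply_symm_apply i, ← φ.apply_symm_apply j, hxy]
          exact ht.2 this
    refine ⟨φ, ?_⟩
    funext i j
    apply propext
    unfold permRel
    rw [Fin.lt_iff_val_lt_val, hlt i j]
    constructor
    · rintro ⟨hadj, ht⟩
      rcases (hor1 i j).mp hadj with h | h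
      · exact h
      · exact absurd (_root_.antisymm ht.1 (key j i h).1) ht.2
    · intro hrij
      exact ⟨(hor1 i j).mpr (Or.inl hrij), key i j hrij⟩

end AcycPaper
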